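/- Let c : ℝ → ℝ be continuous and suppose that the function τ ↦ c(τ)·exp(−τ) is strictly increasing on [0,∞) and satisfies c(τ)·exp(−τ) > 1 for all τ ≥ 0. Then for every t ≥ 0 one has (∫_{(t,∞)} 1/c(τ) dτ)⁻¹ ≥ c(t); moreover, if c(t) → +∞ as t → +∞, then (∫_{(t,∞)} 1/c(τ) dτ)⁻¹ → +∞ as t → +∞. -/

import Mathlib

open MeasureTheory Filter Set

lemma aux_c_pos (c : ℝ → ℝ)
    (hgt : ∀ τ ≥ (0 : ℝ), 1 < c τ * Real.exp (-τ)) :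
    ∀ τ ≥ (0 : ℝ), 0 < c τ := by
  intro τ hτ
  have h := hgt τ hτ
  nlinarith [Real.exp_pos (-τ)]

lemma aux_bound (c : ℝ → ℝ) (hc : Continuous c)
    (hmono : StrictMonoOn (fun τ => c τ * Real.exp (-τ)) (Set.Ici (0 : ℝ)))
    (hgt : ∀ τ ≥ (0 : ℝ), 1 < c τ * Real.exp (-τ))
    (t : ℝ) (ht : 0 ≤ t) :
    (∫ τ in Set.Ioi t, 1 / c τ) ≤ 1 / c t ∧ 0 < ∫ τ in Set.Ioi t, 1 / c τ := by
  have hct : 0 < c t := aux_c_pos c hgt t ht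
  set g : ℝ → ℝ := fun τ => Real.exp t / c t * Real.exp (-τ) with hg
  have hg_int : IntegrableOn g (Set.Ioi t) := by
    have := (exp_neg_integrableOn_Ioi t (one_pos)).const_mul (Real.exp t / c t)
    simpa [hg, neg_mul, one_mul, IntegrableOn] using this
  have hbound : ∀ τ ∈ Set.Ioi t, 1 / c τ ≤ g τ ∧ 0 < c τ := by
    intro τ hτ
    have hτt : t < τ := hτ
    have hτ0 : 0 ≤ τ := le_trans ht hτt.le
    have hcτ : 0 < c τ := aux_c_pos c hgt τ hτ0
    refine ⟨?_, hcτ⟩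
    have hm : c t * Real.exp (-t) < c τ * Real.exp (-τ) := hmono ht hτ0 hτt
    have h1 : 1 / (c τ * Real.exp (-τ)) ≤ 1 / (c t * Real.exp (-t)) := by
      apply one_div_le_one_div_of_le
      · positivity
      · exact hm.le
    have heτ : Real.exp (-τ) > 0 := Real.exp_pos _
    have het : Real.exp t * Real.exp (-t) = 1 := by
      rw [← Real.exp_add]; simp
    show 1 / c τ ≤ Real.exp t / c t * Real.exp (-τ)
    rw [div_le_iff₀ hcτ, div_mul_eq_mul_div, div_mul_eq_mul_div, le_div_iff₀ hct]
    nlinarith [mul_lt_mul_of_pos_left hm (Real.exp_pos t)]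
  have hmeas : AEStronglyMeasurable (fun τ => 1 / c τ)
      (volume.restrict (Set.Ioi t)) := by
    exact ((hc.measurable.inv).aestronglyMeasurable).congr (by
      filter_upwards with x; simp [one_div])
  have h_int : IntegrableOn (fun τ => 1 / c τ) (Set.Ioi t) := by
    apply Integrable.mono' hg_int hmeas
    filter_upwards [ae_restrict_mem measurableSet_Ioi] with τ hτ
    obtain ⟨h1, h2⟩ := hbound τ hτ
    rw [Real.norm_eq_abs, abs_of_nonneg (by positivity)]
    exact h1
  constructor
  · calc (∫ τ in Set.Ioi t, 1 / c τ) ≤ ∫ τ in Set.Ioi t, g τ := by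
          apply setIntegral_mono_on h_int hg_int measurableSet_Ioi
          exact fun τ hτ => (hbound τ hτ).1
      _ = Real.exp t / c t * ∫ τ in Set.Ioi t, Real.exp (-τ) := by
          rw [hg, integral_const_mul]
      _ = 1 / c t := by
          rw [integral_exp_neg_Ioi]
          rw [div_mul_eq_mul_div, ← Real.exp_add]
          simp
  · rw [setIntegral_pos_iff_support_of_nonneg_ae ?_ h_int]
    · have hsub : Set.Ioi t ⊆ Function.support (fun τ => 1 / c τ) := by
        intro τ hτ
        have := (hbound τ hτ).2
        simp [Function.mem_support]
        positivity
      have : Function.support (fun τ => 1 / c τ) ∩ Set.Ioi t = Set.Ioi t := by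
        rw [Set.inter_eq_right]; exact hsub
      rw [this]
      simp
    · filter_upwards [ae_restrict_mem measurableSet_Ioi] with τ hτ
      have := (hbound τ hτ).2
      positivity

/-- The estimate `s'(t) = (∫_t^∞ dτ/c(τ))⁻¹ ≥ c(t)` from the proof of existence of
admissible functions, together with the divergence of the left-hand side when
`c(t) → ∞`. -/
theorem background_cohomology_reciprocal_integral_estimate
    (c : ℝ → ℝ) (hc : Continuous c)
    (hmono : StrictMonoOn (fun τ => c τ * Real.exp (-τ)) (Set.Ici (0 : ℝ)))
    (hgt : ∀ τ ≥ (0 : ℝ), 1 < c τ * Real.exp (-τ)) :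
    (∀ t ≥ (0 : ℝ), c t ≤ (∫ τ in Set.Ioi t, 1 / c τ)⁻¹) ∧
    (Filter.Tendsto c Filter.atTop Filter.atTop →
      Filter.Tendsto (fun t => (∫ τ in Set.Ioi t, 1 / c τ)⁻¹)
        Filter.atTop Filter.atTop) := by
  have key : ∀ t ≥ (0 : ℝ), c t ≤ (∫ τ in Set.Ioi t, 1 / c τ)⁻¹ := by
    intro t ht
    obtain ⟨h1, h2⟩ := aux_bound c hc hmono hgt t ht
    have hct : 0 < c t := aux_c_pos c hgt t ht
    rw [← one_div, le_div_iff₀ h2]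
    have := mul_le_mul_of_nonneg_left h1 hct.le
    rw [mul_one_div, div_self hct.ne'] at this
    exact this
  refine ⟨key, fun hT => ?_⟩
  apply tendsto_atTop_mono' _ _ hT
  filter_upwards [eventually_ge_atTop (0 : ℝ)] with t ht
  exact key t ht
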